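/- arXiv:1706.04418 — 2 statements merged into one kernel-verified Lean document; each statement's English description precedes it below -/
import Mathlib

section
/- Let l ∈ {2, 3}, k > 0, R > 0. Then for every natural number n ≥ 1, ∫_0^R r^{l−1} · j_n(kr)² dr ≤ e^{k²R²} · (e·k/(2n))^{2n} · R^{2n+l} / (2n+l). -/
set_option maxHeartbeats 1000000

open Real Nat

/-- The spherical Bessel function of order `n`, defined by its everywhere absolutely convergent
power series `j_n(x) = Σ_{m=0}^∞ (−1)^m x^{2m+n} / (2^m · m! · (2n+2m+1)!!)`. -/
noncomputable def sphericalBesselJ (n : ℕ) (x : ℝ) : ℝ :=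
  ∑' m : ℕ, (-1 : ℝ) ^ m * x ^ (2 * m + n) /
    (2 ^ m * (m.factorial : ℝ) * ((2 * n + 2 * m + 1)‼ : ℝ))

lemma df_le (a m : ℕ) : a‼ ≤ (a + 2 * m)‼ := by
  induction m with
  | zero => simp
  | succ m ih =>
      have h : a + 2 * (m + 1) = (a + 2 * m) + 2 := by ring
      rw [h, Nat.doubleFactorial_add_two]
      calc a‼ ≤ (a + 2 * m)‼ := ih
        _ ≤ (a + 2 * m + 2) * (a + 2 * m)‼ := Nat.le_mul_of_pos_left _ (by omega)

lemma df_even_le_odd (n : ℕ) : (2 * n)‼ ≤ (2 * n + 1)‼ := by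
  induction n with
  | zero => simp
  | succ n ih =>
      rw [show 2 * (n + 1) + 1 = (2 * n + 1) + 2 from by ring,
        show 2 * (n + 1) = (2 * n) + 2 from by ring,
        Nat.doubleFactorial_add_two, Nat.doubleFactorial_add_two]
      exact Nat.mul_le_mul (by omega) ih

lemma pow_le_df (n : ℕ) : (2 * n / Real.exp 1) ^ n ≤ ((2 * n + 1)‼ : ℝ) := by
  have hfac : (0 : ℝ) < n.factorial := by positivity
  have hterm : (n : ℝ) ^ n / n.factorial ≤ Real.exp n := by
    refine le_trans ?_ (Real.sum_le_exp_of_nonneg (n.cast_nonneg) (n + 1))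
    refine Finset.single_le_sum (f := fun i => (n : ℝ) ^ i / i.factorial) ?_
      (Finset.self_mem_range_succ n)
    intro i _; positivity
  have hexp : Real.exp (n : ℝ) = Real.exp 1 ^ n := by
    rw [← Real.exp_nat_mul, mul_one]
  have h1 : ((n : ℝ)) ^ n ≤ (n.factorial : ℝ) * Real.exp 1 ^ n := by
    rw [hexp, div_le_iff₀ hfac] at hterm
    linarith [hterm]
  have h2 : ((2 : ℝ) * n) ^ n ≤ ((2 * n)‼ : ℝ) * Real.exp 1 ^ n := by
    rw [Nat.doubleFactorial_two_mul]
    push_cast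
    calc ((2 : ℝ) * n) ^ n = 2 ^ n * (n : ℝ) ^ n := by rw [mul_pow]
      _ ≤ 2 ^ n * ((n.factorial : ℝ) * Real.exp 1 ^ n) :=
          mul_le_mul_of_nonneg_left h1 (by positivity)
      _ = 2 ^ n * (n.factorial : ℝ) * Real.exp 1 ^ n := by ring
  have h3 : ((2 * n)‼ : ℝ) ≤ ((2 * n + 1)‼ : ℝ) := by exact_mod_cast df_even_le_odd n
  have he : (0 : ℝ) < Real.exp 1 ^ n := by positivity
  rw [div_pow, div_le_iff₀ he]
  calc ((2 : ℝ) * n) ^ n ≤ ((2 * n)‼ : ℝ) * Real.exp 1 ^ n := h2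
    _ ≤ ((2 * n + 1)‼ : ℝ) * Real.exp 1 ^ n := mul_le_mul_of_nonneg_right h3 he.le

lemma besselJ_bound (n : ℕ) (x : ℝ) :
    |sphericalBesselJ n x| ≤ |x| ^ n * Real.exp (x ^ 2 / 2) / ((2 * n + 1)‼ : ℝ) := by
  have hDpos : (0 : ℝ) < ((2 * n + 1)‼ : ℝ) := by exact_mod_cast Nat.doubleFactorial_pos _
  set f : ℕ → ℝ := fun m => (-1 : ℝ) ^ m * x ^ (2 * m + n) /
    (2 ^ m * (m.factorial : ℝ) * ((2 * n + 2 * m + 1)‼ : ℝ)) with hf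
  set g : ℕ → ℝ := fun m => |x| ^ n / ((2 * n + 1)‼ : ℝ) * ((x ^ 2 / 2) ^ m / m.factorial)
    with hg
  have hgsum : Summable g :=
    Summable.mul_left _ (Real.summable_pow_div_factorial (x ^ 2 / 2))
  have hbound : ∀ m, |f m| ≤ g m := by
    intro m
    have hdf : ((2 * n + 1)‼ : ℝ) ≤ ((2 * n + 2 * m + 1)‼ : ℝ) := by
      have h := df_le (2 * n + 1) m
      have h' : (2 * n + 1) + 2 * m = 2 * n + 2 * m + 1 := by ring
      rw [h'] at h
      exact_mod_cast h
    have hDpos' : (0 : ℝ) < ((2 * n + 2 * m + 1)‼ : ℝ) := by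
      exact_mod_cast Nat.doubleFactorial_pos _
    have hfm : (0 : ℝ) < m.factorial := by positivity
    have habs : |f m| = |x| ^ (2 * m + n) /
        (2 ^ m * (m.factorial : ℝ) * ((2 * n + 2 * m + 1)‼ : ℝ)) := by
      rw [hf]
      simp only
      rw [abs_div, abs_mul, abs_pow, abs_neg, abs_one, one_pow, one_mul, abs_pow,
        abs_of_nonneg (show (0:ℝ) ≤ 2 ^ m * (m.factorial : ℝ) * ((2*n+2*m+1)‼ : ℝ) by positivity)]
    have hxabs : |x| ^ (2 * m + n) = |x| ^ n * (x ^ 2) ^ m := by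
      rw [pow_add, pow_mul, sq_abs, mul_comm]
    have hgeq : g m = |x| ^ n * (x ^ 2) ^ m /
        (2 ^ m * (m.factorial : ℝ) * ((2 * n + 1)‼ : ℝ)) := by
      rw [hg]
      simp only
      rw [div_pow]
      ring
    rw [habs, hxabs, hgeq]
    apply div_le_div_of_nonneg_left (by positivity) (by positivity)
    exact mul_le_mul_of_nonneg_left hdf (by positivity)
  have hfsum : Summable fun m => |f m| :=
    hgsum.of_nonneg_of_le (fun m => abs_nonneg _) hbound
  have h1 : |∑' m, f m| ≤ ∑' m, |f m| := by
    have hs : Summable fun m => ‖f m‖ := by simpa [Real.norm_eq_abs] using hfsum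
    simpa [Real.norm_eq_abs] using norm_tsum_le_tsum_norm hs
  have h2 : ∑' m, |f m| ≤ ∑' m, g m := Summable.tsum_le_tsum hbound hfsum hgsum
  have h3 : ∑' m, g m = |x| ^ n / ((2 * n + 1)‼ : ℝ) * Real.exp (x ^ 2 / 2) := by
    rw [hg, tsum_mul_left]
    congr 1
    rw [Real.exp_eq_exp_ℝ, NormedSpace.exp_eq_tsum_div]
  have heq : |sphericalBesselJ n x| = |∑' m, f m| := rfl
  rw [heq]
  calc |∑' m, f m| ≤ ∑' m, g m := le_trans h1 h2
    _ = |x| ^ n / ((2 * n + 1)‼ : ℝ) * Real.exp (x ^ 2 / 2) := h3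
    _ = |x| ^ n * Real.exp (x ^ 2 / 2) / ((2 * n + 1)‼ : ℝ) := by ring

/-- Let `l ∈ {2, 3}`, `k > 0`, `R > 0`.  Then for every natural number `n ≥ 1`,
`∫_0^R r^{l−1} · j_n(kr)² dr ≤ e^{k²R²} · (e·k/(2n))^{2n} · R^{2n+l} / (2n+l)`. -/
theorem integral_sphericalBesselJ_sq_upper_bound (l : ℕ) (hl : l = 2 ∨ l = 3)
    (k R : ℝ) (hk : 0 < k) (hR : 0 < R) (n : ℕ) (hn : 1 ≤ n) :
    ∫ r in (0 : ℝ)..R, r ^ (l - 1) * sphericalBesselJ n (k * r) ^ 2 ≤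
      Real.exp (k ^ 2 * R ^ 2) * (Real.exp 1 * k / (2 * n)) ^ (2 * n) *
        R ^ (2 * n + l) / (2 * n + l : ℝ) := by
  have hl1 : 1 ≤ l := by rcases hl with rfl | rfl <;> norm_num
  have hn0 : (0 : ℝ) < (n : ℝ) := by exact_mod_cast hn
  have hnl : (0 : ℝ) < (2 * n + l : ℝ) := by positivity
  set C := Real.exp (k ^ 2 * R ^ 2) * (Real.exp 1 * k / (2 * n)) ^ (2 * n) with hCdef
  have hC : 0 ≤ C := by positivity
  have hexpeq : 2 * n + l - 1 + 1 = 2 * n + l := by omega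
  have hgint : ∫ r in (0 : ℝ)..R, C * r ^ (2 * n + l - 1) =
      C * R ^ (2 * n + l) / (2 * n + l : ℝ) := by
    rw [intervalIntegral.integral_const_mul, integral_pow, hexpeq, zero_pow (by omega)]
    have hc : ((2 * n + l - 1 : ℕ) : ℝ) + 1 = 2 * (n : ℝ) + l := by
      push_cast [Nat.cast_sub (show 1 ≤ 2 * n + l by omega)]
      ring
    rw [hc]
    push_cast
    ring
  by_cases hint : IntervalIntegrable
      (fun r => r ^ (l - 1) * sphericalBesselJ n (k * r) ^ 2) MeasureTheory.volume 0 R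
  · have hpt : ∀ r ∈ Set.Icc (0 : ℝ) R,
        r ^ (l - 1) * sphericalBesselJ n (k * r) ^ 2 ≤ C * r ^ (2 * n + l - 1) := by
      intro r hr
      obtain ⟨hr0, hrR⟩ := hr
      have hDpos : (0 : ℝ) < ((2 * n + 1)‼ : ℝ) := by exact_mod_cast Nat.doubleFactorial_pos _
      have hb := besselJ_bound n (k * r)
      rw [abs_of_nonneg (show (0:ℝ) ≤ k * r by positivity)] at hb
      have hj2 : sphericalBesselJ n (k * r) ^ 2 ≤
          ((k * r) ^ n * Real.exp ((k * r) ^ 2 / 2) / ((2 * n + 1)‼ : ℝ)) ^ 2 := by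
        rw [← sq_abs]
        exact pow_le_pow_left₀ (abs_nonneg _) hb 2
      have hE : Real.exp ((k * r) ^ 2 / 2) ^ 2 = Real.exp ((k * r) ^ 2) := by
        rw [sq, ← Real.exp_add]
        ring_nf
      have hsq : ((k * r) ^ n * Real.exp ((k * r) ^ 2 / 2) / ((2 * n + 1)‼ : ℝ)) ^ 2 =
          (k * r) ^ (2 * n) * Real.exp ((k * r) ^ 2) / ((2 * n + 1)‼ : ℝ) ^ 2 := by
        rw [div_pow, mul_pow, hE, ← pow_mul, mul_comm n 2]
      have hD2 : ((2 * n / Real.exp 1) ^ n) ^ 2 ≤ ((2 * n + 1)‼ : ℝ) ^ 2 :=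
        pow_le_pow_left₀ (by positivity) (pow_le_df n) 2
      have hinv : (1 : ℝ) / ((2 * n + 1)‼ : ℝ) ^ 2 ≤ (Real.exp 1 / (2 * n)) ^ (2 * n) := by
        have h2 : (Real.exp 1 / (2 * n)) ^ (2 * n) = 1 / ((2 * n / Real.exp 1) ^ n) ^ 2 := by
          rw [← pow_mul, mul_comm n 2, div_pow, div_pow, one_div, inv_div]
        rw [h2]
        exact one_div_le_one_div_of_le (by positivity) hD2
      have hexp_le : Real.exp ((k * r) ^ 2) ≤ Real.exp (k ^ 2 * R ^ 2) := by
        apply Real.exp_le_exp.mpr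
        rw [mul_pow]
        exact mul_le_mul_of_nonneg_left (pow_le_pow_left₀ hr0 hrR 2) (by positivity)
      have hrsplit : r ^ (2 * n + l - 1) = r ^ (2 * n) * r ^ (l - 1) := by
        rw [← pow_add]; congr 1; omega
      calc r ^ (l - 1) * sphericalBesselJ n (k * r) ^ 2
          ≤ r ^ (l - 1) *
              ((k * r) ^ (2 * n) * Real.exp ((k * r) ^ 2) / ((2 * n + 1)‼ : ℝ) ^ 2) := by
            rw [← hsq]
            exact mul_le_mul_of_nonneg_left hj2 (by positivity)
        _ = (k ^ (2 * n) * Real.exp ((k * r) ^ 2) * (1 / ((2 * n + 1)‼ : ℝ) ^ 2)) *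
              r ^ (2 * n + l - 1) := by
            rw [hrsplit, mul_pow]
            ring
        _ ≤ (k ^ (2 * n) * Real.exp (k ^ 2 * R ^ 2) * (Real.exp 1 / (2 * n)) ^ (2 * n)) *
              r ^ (2 * n + l - 1) := by
            apply mul_le_mul_of_nonneg_right _ (by positivity)
            have h1 : k ^ (2*n) * Real.exp ((k*r)^2) * (1 / ((2*n+1)‼:ℝ)^2) ≤
                k ^ (2*n) * Real.exp (k^2*R^2) * (1 / ((2*n+1)‼:ℝ)^2) := by
              apply mul_le_mul_of_nonneg_right _ (by positivity)
              exact mul_le_mul_of_nonneg_left hexp_le (by positivity)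
            exact le_trans h1 (mul_le_mul_of_nonneg_left hinv (by positivity))
        _ = C * r ^ (2 * n + l - 1) := by
            rw [hCdef]
            congr 1
            rw [div_pow, div_pow, mul_pow]
            ring
    have hgI : IntervalIntegrable (fun r => C * r ^ (2 * n + l - 1))
        MeasureTheory.volume 0 R := (continuous_const.mul (continuous_pow _)).intervalIntegrable _ _
    calc ∫ r in (0 : ℝ)..R, r ^ (l - 1) * sphericalBesselJ n (k * r) ^ 2
        ≤ ∫ r in (0 : ℝ)..R, C * r ^ (2 * n + l - 1) :=
          intervalIntegral.integral_mono_on hR.le hint hgI hpt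
      _ = C * R ^ (2 * n + l) / (2 * n + l : ℝ) := hgint
      _ = Real.exp (k ^ 2 * R ^ 2) * (Real.exp 1 * k / (2 * n)) ^ (2 * n) *
            R ^ (2 * n + l) / (2 * n + l : ℝ) := by rw [hCdef]
  · rw [intervalIntegral.integral_undef hint]
    positivity
end

section
/- Let l ∈ {2, 3}, k > 0, R > 0, and let (a_n^m), for n ∈ ℕ and integers m with −n ≤ m ≤ n, be complex coefficients satisfying Σ_{n=0}^∞ Σ_{m=−n}^n |a_n^m|² ≤ 1. Then there exists N₀ ∈ ℕ (depending only on k, R, l) such that for every natural number N ≥ N₀, Σ_{n=N+1}^∞ Σ_{m=−n}^n |a_n^m|² · ∫_0^R r^{l−1} j_n(kr)² dr ≤ e^{k²R²} · R^l · (e·k·R/(2(N+1)))^{2(N+1)}. -/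
open Real Nat

lemma aux_df_mono (n m : ℕ) : ((2 * n + 1)‼ : ℕ) ≤ (2 * n + 2 * m + 1)‼ := by
  induction m with
  | zero => simp
  | succ m ih =>
    have h : 2 * n + 2 * (m + 1) + 1 = (2 * n + 2 * m + 1) + 2 := by ring
    rw [h, Nat.doubleFactorial_add_two]
    calc ((2 * n + 1)‼ : ℕ) ≤ (2 * n + 2 * m + 1)‼ := ih
    _ ≤ _ := Nat.le_mul_of_pos_left _ (by positivity)

lemma aux_pow_fact_le_df : ∀ n : ℕ, 2 ^ n * n ! ≤ (2 * n + 1)‼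
  | 0 => le_refl 1
  | n + 1 => by
    have h : 2 * (n + 1) + 1 = (2 * n + 1) + 2 := by ring
    rw [h, Nat.doubleFactorial_add_two]
    calc 2 ^ (n + 1) * (n + 1)! = (2 * n + 2) * (2 ^ n * n !) := by
          rw [Nat.factorial_succ]; ring
    _ ≤ ((2 * n + 1) + 2) * (2 * n + 1)‼ :=
        Nat.mul_le_mul (by omega) (aux_pow_fact_le_df n)

lemma aux_df_lower (n : ℕ) : ((2 * n : ℕ) : ℝ) ^ n ≤ Real.exp 1 ^ n * ((2 * n + 1)‼ : ℝ) := by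
  have hfac : (0 : ℝ) < (n ! : ℝ) := by positivity
  have h1 : ((n : ℝ)) ^ n ≤ Real.exp 1 ^ n * (n ! : ℝ) := by
    have h := Real.pow_div_factorial_le_exp (x := (n : ℝ)) n.cast_nonneg n
    have he : Real.exp (n : ℝ) = Real.exp 1 ^ n := by
      rw [← Real.exp_nat_mul, mul_one]
    rw [div_le_iff₀ hfac] at h
    rw [he] at h
    linarith [h]
  have h2 : ((2 ^ n * n ! : ℕ) : ℝ) ≤ ((2 * n + 1)‼ : ℝ) := by
    exact_mod_cast aux_pow_fact_le_df n
  push_cast at h2 ⊢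
  calc (2 * (n : ℝ)) ^ n = 2 ^ n * (n : ℝ) ^ n := by rw [mul_pow]
  _ ≤ 2 ^ n * (Real.exp 1 ^ n * (n ! : ℝ)) := by
      have : (0:ℝ) ≤ 2 ^ n := by positivity
      nlinarith [h1, this]
  _ = Real.exp 1 ^ n * (2 ^ n * (n ! : ℝ)) := by ring
  _ ≤ Real.exp 1 ^ n * ((2 * n + 1)‼ : ℝ) := by
      have := Real.exp_pos 1
      have h3 : (0:ℝ) ≤ Real.exp 1 ^ n := by positivity
      exact mul_le_mul_of_nonneg_left h2 h3

lemma abs_sphericalBesselJ_le (n : ℕ) (x : ℝ) :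
    |sphericalBesselJ n x| ≤ Real.exp (x ^ 2 / 2) * |x| ^ n / ((2 * n + 1)‼ : ℝ) := by
  set D : ℝ := ((2 * n + 1)‼ : ℝ) with hDdef
  have hD : (0 : ℝ) < D := by
    rw [hDdef]; exact_mod_cast Nat.doubleFactorial_pos (2 * n + 1)
  set f : ℕ → ℝ := fun m => (-1 : ℝ) ^ m * x ^ (2 * m + n) /
      (2 ^ m * (m.factorial : ℝ) * ((2 * n + 2 * m + 1)‼ : ℝ)) with hfdef
  set g : ℕ → ℝ := fun m => |x| ^ n / D * ((x ^ 2 / 2) ^ m / m !) with hgdef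
  have hg : Summable g := (Real.summable_pow_div_factorial (x ^ 2 / 2)).mul_left _
  have hbound : ∀ m, ‖f m‖ ≤ g m := by
    intro m
    have hDm : D ≤ ((2 * n + 2 * m + 1)‼ : ℝ) := by
      rw [hDdef]; exact_mod_cast aux_df_mono n m
    have hDm0 : (0 : ℝ) < ((2 * n + 2 * m + 1)‼ : ℝ) := by
      exact_mod_cast Nat.doubleFactorial_pos (2 * n + 2 * m + 1)
    have hden0 : (0 : ℝ) < 2 ^ m * (m.factorial : ℝ) := by positivity
    have hnum : |(-1 : ℝ) ^ m * x ^ (2 * m + n)| = (x ^ 2) ^ m * |x| ^ n := by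
      rw [abs_mul, abs_pow, abs_neg, abs_one, one_pow, one_mul, abs_pow, pow_add, pow_mul,
        sq_abs]
    have hge : g m = (x ^ 2) ^ m * |x| ^ n / (2 ^ m * (m.factorial : ℝ) * D) := by
      rw [hgdef]
      show |x| ^ n / D * ((x ^ 2 / 2) ^ m / m !) = _
      rw [div_pow]
      field_simp
    calc ‖f m‖
        = (x ^ 2) ^ m * |x| ^ n / (2 ^ m * (m.factorial : ℝ) * ((2 * n + 2 * m + 1)‼ : ℝ)) := by
          rw [hfdef, Real.norm_eq_abs, abs_div, hnum,
            abs_of_pos (mul_pos hden0 hDm0)]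
    _ ≤ (x ^ 2) ^ m * |x| ^ n / (2 ^ m * (m.factorial : ℝ) * D) := by
          gcongr
    _ = g m := hge.symm
  have hfs : Summable fun m => ‖f m‖ :=
    Summable.of_nonneg_of_le (fun m => norm_nonneg _) hbound hg
  have htsum_g : ∑' m, g m = |x| ^ n / D * Real.exp (x ^ 2 / 2) := by
    rw [hgdef, tsum_mul_left]
    congr 1
    rw [Real.exp_eq_exp_ℝ, NormedSpace.exp_eq_tsum_div]
  calc |sphericalBesselJ n x| = ‖∑' m, f m‖ := by rw [sphericalBesselJ]; rfl
  _ ≤ ∑' m, ‖f m‖ := norm_tsum_le_tsum_norm hfs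
  _ ≤ ∑' m, g m := Summable.tsum_le_tsum hbound hfs hg
  _ = |x| ^ n / D * Real.exp (x ^ 2 / 2) := htsum_g
  _ = Real.exp (x ^ 2 / 2) * |x| ^ n / D := by ring

lemma abs_integral_bound (l n : ℕ) (hn : 1 ≤ n) (hl : 1 ≤ l) (k R : ℝ)
    (hk : 0 < k) (hR : 0 < R) :
    |∫ r in (0 : ℝ)..R, r ^ (l - 1) * sphericalBesselJ n (k * r) ^ 2| ≤
      R ^ l * (Real.exp (k ^ 2 * R ^ 2) * (Real.exp 1 * k * R / (2 * n)) ^ (2 * n)) := by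
  have hn' : (0 : ℝ) < 2 * (n : ℝ) := by positivity
  set C : ℝ := R ^ (l - 1) * (Real.exp (k ^ 2 * R ^ 2) *
      (Real.exp 1 * k * R / (2 * n)) ^ (2 * n)) with hCdef
  have key : ∀ r ∈ Set.uIoc (0 : ℝ) R,
      ‖r ^ (l - 1) * sphericalBesselJ n (k * r) ^ 2‖ ≤ C := by
    intro r hr
    rw [Set.uIoc_of_le hR.le] at hr
    obtain ⟨hr0, hrR⟩ := hr
    have hkr : 0 < k * r := by positivity
    have hkrR : k * r ≤ k * R := by nlinarith
    -- bound on |j_n(kr)|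
    have hj : |sphericalBesselJ n (k * r)| ≤
        Real.exp ((k * r) ^ 2 / 2) * (Real.exp 1 * k * r / (2 * n)) ^ n := by
      have h1 := abs_sphericalBesselJ_le n (k * r)
      have hD : (0 : ℝ) < ((2 * n + 1)‼ : ℝ) := by
        exact_mod_cast Nat.doubleFactorial_pos (2 * n + 1)
      have hlow := aux_df_lower n
      push_cast at hlow
      have h2 : |k * r| ^ n / ((2 * n + 1)‼ : ℝ) ≤ (Real.exp 1 * k * r / (2 * n)) ^ n := by
        rw [abs_of_pos hkr, div_pow, div_le_div_iff₀ hD (by positivity)]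
        calc (k * r) ^ n * (2 * (n : ℝ)) ^ n ≤
            (k * r) ^ n * (Real.exp 1 ^ n * ((2 * n + 1)‼ : ℝ)) := by
              have : (0:ℝ) ≤ (k * r) ^ n := by positivity
              exact mul_le_mul_of_nonneg_left hlow this
        _ = (Real.exp 1 * k * r) ^ n * ((2 * n + 1)‼ : ℝ) := by
              rw [mul_pow, mul_pow]; ring
      calc |sphericalBesselJ n (k * r)| ≤
          Real.exp ((k * r) ^ 2 / 2) * |k * r| ^ n / ((2 * n + 1)‼ : ℝ) := h1
      _ = Real.exp ((k * r) ^ 2 / 2) * (|k * r| ^ n / ((2 * n + 1)‼ : ℝ)) := by ring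
      _ ≤ Real.exp ((k * r) ^ 2 / 2) * (Real.exp 1 * k * r / (2 * n)) ^ n := by
          exact mul_le_mul_of_nonneg_left h2 (Real.exp_pos _).le
    have hjsq : sphericalBesselJ n (k * r) ^ 2 ≤
        Real.exp (k ^ 2 * R ^ 2) * (Real.exp 1 * k * R / (2 * n)) ^ (2 * n) := by
      have hjr : 0 ≤ Real.exp ((k * r) ^ 2 / 2) * (Real.exp 1 * k * r / (2 * n)) ^ n := by
        positivity
      have h3 : sphericalBesselJ n (k * r) ^ 2 ≤
          (Real.exp ((k * r) ^ 2 / 2) * (Real.exp 1 * k * r / (2 * n)) ^ n) ^ 2 := by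
        rw [← sq_abs]
        exact pow_le_pow_left₀ (abs_nonneg _) hj 2
      have h4 : (Real.exp ((k * r) ^ 2 / 2) * (Real.exp 1 * k * r / (2 * n)) ^ n) ^ 2 =
          Real.exp ((k * r) ^ 2) * (Real.exp 1 * k * r / (2 * n)) ^ (2 * n) := by
        rw [mul_pow, sq (Real.exp _), ← Real.exp_add, add_halves, ← pow_mul']
      rw [h4] at h3
      have h5 : Real.exp ((k * r) ^ 2) ≤ Real.exp (k ^ 2 * R ^ 2) := by
        apply Real.exp_le_exp.mpr
        nlinarith
      have h6 : (Real.exp 1 * k * r / (2 * n)) ^ (2 * n) ≤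
          (Real.exp 1 * k * R / (2 * n)) ^ (2 * n) := by
        apply pow_le_pow_left₀ (by positivity)
        gcongr
      calc sphericalBesselJ n (k * r) ^ 2 ≤
          Real.exp ((k * r) ^ 2) * (Real.exp 1 * k * r / (2 * n)) ^ (2 * n) := h3
      _ ≤ Real.exp (k ^ 2 * R ^ 2) * (Real.exp 1 * k * R / (2 * n)) ^ (2 * n) := by
          apply mul_le_mul h5 h6 (by positivity) (Real.exp_pos _).le
    have hrl : r ^ (l - 1) ≤ R ^ (l - 1) := pow_le_pow_left₀ hr0.le hrR _
    have hnn : (0:ℝ) ≤ sphericalBesselJ n (k * r) ^ 2 := sq_nonneg _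
    rw [norm_mul, Real.norm_eq_abs, Real.norm_eq_abs, abs_of_pos (pow_pos hr0 _),
      abs_of_nonneg hnn]
    calc r ^ (l - 1) * sphericalBesselJ n (k * r) ^ 2 ≤
        R ^ (l - 1) * (Real.exp (k ^ 2 * R ^ 2) * (Real.exp 1 * k * R / (2 * n)) ^ (2 * n)) := by
          apply mul_le_mul hrl hjsq hnn (by positivity)
    _ = C := rfl
  have h := intervalIntegral.norm_integral_le_of_norm_le_const key
  rw [Real.norm_eq_abs] at h
  calc |∫ r in (0 : ℝ)..R, r ^ (l - 1) * sphericalBesselJ n (k * r) ^ 2| ≤ C * |R - 0| := h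
  _ = R ^ l * (Real.exp (k ^ 2 * R ^ 2) * (Real.exp 1 * k * R / (2 * n)) ^ (2 * n)) := by
      rw [sub_zero, abs_of_pos hR, hCdef]
      have : R ^ (l - 1) * R = R ^ l := by
        conv_rhs => rw [← Nat.succ_pred_eq_of_pos hl]
        rw [pow_succ]
        rfl
      rw [mul_comm (R ^ (l-1)) _, mul_assoc, this, mul_comm]

/-- Let `l ∈ {2, 3}`, `k > 0`, `R > 0`, and let `(a_n^m)`, for `n ∈ ℕ` and
integers `m` with `−n ≤ m ≤ n`, be complex coefficients satisfying
`Σ_{n=0}^∞ Σ_{m=−n}^n |a_n^m|² ≤ 1`.  Then there exists `N₀ ∈ ℕ` (depending only on `k, R, l`)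
such that for every natural number `N ≥ N₀`,
`Σ_{n=N+1}^∞ Σ_{m=−n}^n |a_n^m|² · ∫_0^R r^{l−1} j_n(kr)² dr
  ≤ e^{k²R²} · R^l · (e·k·R/(2(N+1)))^{2(N+1)}`. -/
theorem tail_sum_sphericalBesselJ_bound (l : ℕ) (hl : l = 2 ∨ l = 3)
    (k R : ℝ) (hk : 0 < k) (hR : 0 < R) :
    ∃ N₀ : ℕ, ∀ a : ℕ → ℤ → ℂ,
      (Summable fun n : ℕ => ∑ m ∈ Finset.Icc (-(n : ℤ)) (n : ℤ), ‖a n m‖ ^ 2) →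
      (∑' n : ℕ, ∑ m ∈ Finset.Icc (-(n : ℤ)) (n : ℤ), ‖a n m‖ ^ 2) ≤ 1 →
      ∀ N : ℕ, N₀ ≤ N →
      (∑' n : ℕ, if N + 1 ≤ n then
          (∑ m ∈ Finset.Icc (-(n : ℤ)) (n : ℤ), ‖a n m‖ ^ 2) *
            ∫ r in (0 : ℝ)..R, r ^ (l - 1) * sphericalBesselJ n (k * r) ^ 2
        else 0) ≤
      Real.exp (k ^ 2 * R ^ 2) * R ^ l *
        (Real.exp 1 * k * R / (2 * ((N : ℝ) + 1))) ^ (2 * (N + 1)) := by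
  refine ⟨⌈Real.exp 1 * k * R⌉₊, ?_⟩
  intro a hsum hsum1 N hN
  set q : ℝ := Real.exp 1 * k * R / (2 * ((N : ℝ) + 1)) with hqdef
  have hekR : 0 < Real.exp 1 * k * R := by positivity
  have hq0 : 0 ≤ q := by positivity
  have hq1 : q ≤ 1 := by
    rw [hqdef, div_le_one (by positivity)]
    have h1 : Real.exp 1 * k * R ≤ (⌈Real.exp 1 * k * R⌉₊ : ℝ) := Nat.le_ceil _
    have h2 : ((⌈Real.exp 1 * k * R⌉₊ : ℕ) : ℝ) ≤ (N : ℝ) := by exact_mod_cast hN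
    nlinarith [Nat.cast_nonneg (α := ℝ) N]
  set C : ℝ := Real.exp (k ^ 2 * R ^ 2) * R ^ l * q ^ (2 * (N + 1)) with hCdef
  have hC0 : 0 ≤ C := by positivity
  set s : ℕ → ℝ := fun n => ∑ m ∈ Finset.Icc (-(n : ℤ)) (n : ℤ), ‖a n m‖ ^ 2 with hsdef
  have hs0 : ∀ n, 0 ≤ s n := fun n => Finset.sum_nonneg fun m _ => by positivity
  set f : ℕ → ℝ := fun n => if N + 1 ≤ n then
      s n * ∫ r in (0 : ℝ)..R, r ^ (l - 1) * sphericalBesselJ n (k * r) ^ 2 else 0 with hfdef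
  have hl1 : 1 ≤ l := by rcases hl with h | h <;> omega
  have hints : ∀ n, N + 1 ≤ n →
      |∫ r in (0 : ℝ)..R, r ^ (l - 1) * sphericalBesselJ n (k * r) ^ 2| ≤ C := by
    intro n hn1
    have hn : 1 ≤ n := by omega
    refine (abs_integral_bound l n hn hl1 k R hk hR).trans ?_
    have hqn0 : 0 ≤ Real.exp 1 * k * R / (2 * (n : ℝ)) := by positivity
    have hd : 2 * ((N : ℝ) + 1) ≤ 2 * (n : ℝ) := by
      have : (N : ℝ) + 1 ≤ (n : ℝ) := by exact_mod_cast hn1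
      linarith
    have hqn : Real.exp 1 * k * R / (2 * (n : ℝ)) ≤ q := by
      rw [hqdef]
      gcongr
    have hpow : (Real.exp 1 * k * R / (2 * (n : ℝ))) ^ (2 * n) ≤ q ^ (2 * (N + 1)) :=
      calc (Real.exp 1 * k * R / (2 * (n : ℝ))) ^ (2 * n) ≤ q ^ (2 * n) :=
            pow_le_pow_left₀ hqn0 hqn _
      _ ≤ q ^ (2 * (N + 1)) := pow_le_pow_of_le_one hq0 hq1 (by omega)
    calc R ^ l * (Real.exp (k ^ 2 * R ^ 2) * (Real.exp 1 * k * R / (2 * (n : ℝ))) ^ (2 * n))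
        ≤ R ^ l * (Real.exp (k ^ 2 * R ^ 2) * q ^ (2 * (N + 1))) := by gcongr
    _ = C := by rw [hCdef]; ring
  have hfb : ∀ n, ‖f n‖ ≤ s n * C := by
    intro n
    rw [hfdef]
    by_cases hc : N + 1 ≤ n
    · simp only [if_pos hc]
      rw [Real.norm_eq_abs, abs_mul, abs_of_nonneg (hs0 n)]
      exact mul_le_mul_of_nonneg_left (hints n hc) (hs0 n)
    · simp only [if_neg hc, norm_zero]
      exact mul_nonneg (hs0 n) hC0
  have hfle : ∀ n, f n ≤ s n * C := fun n =>
    (le_abs_self _).trans (by rw [← Real.norm_eq_abs]; exact hfb n)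
  have hgsum : Summable (fun n => s n * C) := hsum.mul_right C
  have hfsum : Summable f := Summable.of_norm_bounded hgsum hfb
  calc (∑' n, f n) ≤ ∑' n, s n * C := Summable.tsum_le_tsum hfle hfsum hgsum
  _ = (∑' n, s n) * C := by rw [tsum_mul_right]
  _ ≤ 1 * C := mul_le_mul_of_nonneg_right hsum1 hC0
  _ = C := one_mul C
end
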